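/- Let Z_{α,β} be the β-stable process defined by the stochastic integral Z_{α,β}(t) = ∫_{ℝ₊}∫_ℝ (𝔣(ξ,t-s) - 𝔣(ξ,-s)) K(dξ,ds), where 𝔣(x,u) = 1 - e^{-xu} for x,u > 0 and 0 otherwise, and K is a β-stable Lévy basis with control measure α ξ^α dξ ds. Then Z_{α,β} is self-similar with index H = 1 - α/β: for every a > 0, the finite-dimensional distributions of {Z_{α,β}(at)} equal those of {a^{1-α/β} Z_{α,β}(t)}. -/

import Mathlib

open MeasureTheory Real

/-- The kernel 𝔣(x,u) = 1 - e^{-xu} for x,u > 0 and 0 otherwise. -/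
noncomputable def frakf (x u : ℝ) : ℝ :=
  if 0 < x ∧ 0 < u then 1 - Real.exp (-(x * u)) else 0

/-- The stable cumulant factor ω(z; β, c⁺, c⁻) (case β ≠ 1). -/
noncomputable def omegaFactor (β cp cm : ℝ) (z : ℝ) : ℂ :=
  ((Real.Gamma (2 - β) / (1 - β) * ((cp + cm) * Real.cos (Real.pi * β / 2)) : ℝ) : ℂ) -
    Complex.I *
      ((Real.Gamma (2 - β) / (1 - β) *
        ((cp - cm) * Real.sign z * Real.sin (Real.pi * β / 2)) : ℝ) : ℂ)

/-- Joint cumulant functional of (Z_{α,β}(t₁),…,Z_{α,β}(t_m)). -/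
noncomputable def stableCumulant {m : ℕ} (α β cp cm : ℝ) (ζ t : Fin m → ℝ) : ℂ :=
  -∫ ξ in Set.Ioi (0:ℝ), ∫ s : ℝ,
      (((|∑ j, ζ j * (frakf ξ (t j - s) - frakf ξ (-s))| ^ β * (α * ξ ^ (α - β)) : ℝ)) : ℂ) *
        omegaFactor β cp cm (∑ j, ζ j * (frakf ξ (t j - s) - frakf ξ (-s)))

lemma frakf_mul {a : ℝ} (ha : 0 < a) (x u : ℝ) : frakf x (a * u) = frakf (a * x) u := by
  unfold frakf
  have h1 : (0 < x ∧ 0 < a * u) ↔ (0 < a * x ∧ 0 < u) := by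
    constructor
    · rintro ⟨hx, hau⟩
      refine ⟨mul_pos ha hx, ?_⟩
      rcases mul_pos_iff.1 hau with ⟨_, hu⟩ | ⟨h, _⟩
      · exact hu
      · exact absurd ha (not_lt.2 h.le)
    · rintro ⟨hax, hu⟩
      refine ⟨?_, mul_pos ha hu⟩
      rcases mul_pos_iff.1 hax with ⟨_, hx⟩ | ⟨h, _⟩
      · exact hx
      · exact absurd ha (not_lt.2 h.le)
  exact if_congr h1 (by ring_nf) rfl

lemma Real.sign_mul_of_pos' {c : ℝ} (hc : 0 < c) (z : ℝ) :
    Real.sign (c * z) = Real.sign z := by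
  rcases lt_trichotomy z 0 with hz | hz | hz
  · rw [Real.sign_of_neg hz, Real.sign_of_neg (mul_neg_of_pos_of_neg hc hz)]
  · simp [hz]
  · rw [Real.sign_of_pos hz, Real.sign_of_pos (mul_pos hc hz)]

lemma omegaFactor_mul_of_pos (β cp cm : ℝ) {c : ℝ} (hc : 0 < c) (z : ℝ) :
    omegaFactor β cp cm (c * z) = omegaFactor β cp cm z := by
  unfold omegaFactor
  rw [Real.sign_mul_of_pos' hc]

theorem Z_alpha_beta_self_similar
    (α β cp cm : ℝ)
    (hα0 : 0 < α) (hα1 : α < 1) (hβ1 : 1 + α < β) (hβ2 : β < 2)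
    (hcp : 0 ≤ cp) (hcm : 0 ≤ cm) (hcpm : 0 < cp + cm) :
    ∀ a : ℝ, 0 < a → ∀ (m : ℕ) (ζ t : Fin m → ℝ),
      stableCumulant α β cp cm ζ (fun j => a * t j) =
        stableCumulant α β cp cm (fun j => a ^ (1 - α / β) * ζ j) t := by
  intro a ha m ζ t
  have hβ0 : (0:ℝ) < β := by linarith
  set H : ℝ := 1 - α / β with hHdef
  have haH : (0:ℝ) < a ^ H := Real.rpow_pos_of_pos ha H
  have hHβ : (a ^ H) ^ β = a ^ (β - α) := by
    rw [← Real.rpow_mul ha.le]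
    congr 1
    rw [hHdef]
    field_simp
  set S : ℝ → ℝ → ℝ := fun η s => ∑ j, ζ j * (frakf η (t j - s) - frakf η (-s)) with hS
  set W : ℝ → ℂ := fun z => ((|z| ^ β : ℝ) : ℂ) * omegaFactor β cp cm z with hW
  set φ : ℝ → ℂ := fun η => ∫ s : ℝ, ((α * η ^ (α - β) : ℝ) : ℂ) * W (S η s) with hφ
  have hWscale : ∀ z : ℝ, W (a ^ H * z) = ((a ^ (β - α) : ℝ) : ℂ) * W z := by
    intro z
    simp only [hW]
    rw [abs_mul, abs_of_pos haH, Real.mul_rpow haH.le (abs_nonneg z), hHβ,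
      omegaFactor_mul_of_pos β cp cm haH, Complex.ofReal_mul]
    ring
  unfold stableCumulant
  rw [neg_inj]
  have hsum2 : ∀ η s, (∑ j, (a ^ H * ζ j) * (frakf η (t j - s) - frakf η (-s)))
      = a ^ H * S η s := by
    intro η s
    rw [hS, Finset.mul_sum]
    exact Finset.sum_congr rfl fun j _ => by ring
  -- RHS transformation
  have hRHS : (∫ ξ in Set.Ioi (0:ℝ), ∫ s : ℝ,
      (((|∑ j, (a ^ H * ζ j) * (frakf ξ (t j - s) - frakf ξ (-s))| ^ β * (α * ξ ^ (α - β)) : ℝ)) : ℂ) *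
        omegaFactor β cp cm (∑ j, (a ^ H * ζ j) * (frakf ξ (t j - s) - frakf ξ (-s))))
      = ((a ^ (β - α) : ℝ) : ℂ) * ∫ ξ in Set.Ioi (0:ℝ), φ ξ := by
    rw [← integral_const_mul]
    refine integral_congr_ae (Filter.Eventually.of_forall fun ξ => ?_)
    dsimp only [hφ]
    rw [← integral_const_mul]
    refine integral_congr_ae (Filter.Eventually.of_forall fun s => ?_)
    dsimp only
    rw [hsum2]
    have hws := hWscale (S ξ s)
    simp only [hW] at hws
    push_cast
    calc ((|a ^ H * S ξ s| ^ β : ℝ) : ℂ) * ((α : ℂ) * ((ξ ^ (α - β) : ℝ) : ℂ)) *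
          omegaFactor β cp cm (a ^ H * S ξ s)
        = (((|a ^ H * S ξ s| ^ β : ℝ) : ℂ) * omegaFactor β cp cm (a ^ H * S ξ s)) *
          ((α : ℂ) * ((ξ ^ (α - β) : ℝ) : ℂ)) := by ring
      _ = (((a ^ (β - α) : ℝ) : ℂ) * (((|S ξ s| ^ β : ℝ) : ℂ) * omegaFactor β cp cm (S ξ s))) *
          ((α : ℂ) * ((ξ ^ (α - β) : ℝ) : ℂ)) := by rw [hws]
      _ = ((a ^ (β - α) : ℝ) : ℂ) * (((α : ℂ) * ((ξ ^ (α - β) : ℝ) : ℂ)) *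
          (((|S ξ s| ^ β : ℝ) : ℂ) * omegaFactor β cp cm (S ξ s))) := by ring
  rw [hRHS]
  -- LHS: inner substitution s ↦ a s
  have hstep1 : ∀ ξ : ℝ, (∫ s : ℝ,
      (((|∑ j, ζ j * (frakf ξ (a * t j - s) - frakf ξ (-s))| ^ β * (α * ξ ^ (α - β)) : ℝ)) : ℂ) *
        omegaFactor β cp cm (∑ j, ζ j * (frakf ξ (a * t j - s) - frakf ξ (-s))))
      = (a : ℂ) * ∫ s : ℝ, ((α * ξ ^ (α - β) : ℝ) : ℂ) * W (S (a * ξ) s) := by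
    intro ξ
    have hcomp : ∀ s : ℝ, (∑ j, ζ j * (frakf ξ (a * t j - a * s) - frakf ξ (-(a * s))))
        = S (a * ξ) s := by
      intro s
      refine Finset.sum_congr rfl fun j _ => ?_
      rw [show a * t j - a * s = a * (t j - s) by ring, show -(a * s) = a * (-s) by ring,
        frakf_mul ha, frakf_mul ha]
    have key := MeasureTheory.Measure.integral_comp_mul_left
      (g := fun s : ℝ =>
        (((|∑ j, ζ j * (frakf ξ (a * t j - s) - frakf ξ (-s))| ^ β * (α * ξ ^ (α - β)) : ℝ)) : ℂ) *
          omegaFactor β cp cm (∑ j, ζ j * (frakf ξ (a * t j - s) - frakf ξ (-s)))) a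
    rw [abs_of_pos (inv_pos.2 ha)] at key
    have key2 : (∫ s : ℝ,
        (((|∑ j, ζ j * (frakf ξ (a * t j - s) - frakf ξ (-s))| ^ β * (α * ξ ^ (α - β)) : ℝ)) : ℂ) *
          omegaFactor β cp cm (∑ j, ζ j * (frakf ξ (a * t j - s) - frakf ξ (-s))))
        = a • ∫ s : ℝ,
          (((|S (a * ξ) s| ^ β * (α * ξ ^ (α - β)) : ℝ)) : ℂ) *
            omegaFactor β cp cm (S (a * ξ) s) := by
      simp only [hcomp] at key
      rw [key, smul_smul, mul_inv_cancel₀ ha.ne', one_smul]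
    rw [key2, Complex.real_smul]
    congr 1
    refine integral_congr_ae (Filter.Eventually.of_forall fun s => ?_)
    dsimp only [hW]
    push_cast
    ring
  calc (∫ ξ in Set.Ioi (0:ℝ), ∫ s : ℝ,
      (((|∑ j, ζ j * (frakf ξ (a * t j - s) - frakf ξ (-s))| ^ β * (α * ξ ^ (α - β)) : ℝ)) : ℂ) *
        omegaFactor β cp cm (∑ j, ζ j * (frakf ξ (a * t j - s) - frakf ξ (-s))))
      = ∫ ξ in Set.Ioi (0:ℝ), ((a * a ^ (β - α) : ℝ) : ℂ) * φ (a * ξ) := by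
        refine setIntegral_congr_ae measurableSet_Ioi
          (Filter.Eventually.of_forall fun ξ hξ => ?_)
        rw [hstep1 ξ]
        have hξ0 : (0:ℝ) < ξ := hξ
        have h1 : a ^ (β - α) * a ^ (α - β) = 1 := by
          rw [← Real.rpow_add ha]; norm_num
        have hG : (α * ξ ^ (α - β) : ℝ) = a ^ (β - α) * (α * (a * ξ) ^ (α - β)) := by
          calc α * ξ ^ (α - β) = (a ^ (β - α) * a ^ (α - β)) * (α * ξ ^ (α - β)) := by
                rw [h1]; ring
            _ = a ^ (β - α) * (α * (a ^ (α - β) * ξ ^ (α - β))) := by ring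
            _ = a ^ (β - α) * (α * (a * ξ) ^ (α - β)) := by
                rw [Real.mul_rpow ha.le hξ0.le]
        have : (∫ s : ℝ, ((α * ξ ^ (α - β) : ℝ) : ℂ) * W (S (a * ξ) s))
            = ((a ^ (β - α) : ℝ) : ℂ) * φ (a * ξ) := by
          simp only [hφ]
          rw [← integral_const_mul]
          refine integral_congr_ae (Filter.Eventually.of_forall fun s => ?_)
          dsimp only
          rw [hG]
          push_cast
          ring
        rw [this]
        push_cast
        ring
    _ = ((a * a ^ (β - α) : ℝ) : ℂ) * ∫ ξ in Set.Ioi (0:ℝ), φ (a * ξ) := integral_const_mul _ _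
    _ = ((a * a ^ (β - α) : ℝ) : ℂ) * (a⁻¹ • ∫ ξ in Set.Ioi (a * 0), φ ξ) := by
        rw [MeasureTheory.integral_comp_mul_left_Ioi φ 0 ha]
    _ = ((a ^ (β - α) : ℝ) : ℂ) * ∫ ξ in Set.Ioi (0:ℝ), φ ξ := by
        rw [mul_zero, Complex.real_smul]
        have ha' : (a : ℂ) ≠ 0 := by exact_mod_cast ha.ne'
        push_cast
        field_simp
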